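/- In the binary choice model under the stated conditions, the identified set satisfies the sandwich relation Θ̲ ⊆ Θ = Θ̃ ⊆ Θ̄, where Θ̲ = {b : X'b·[P(Y=1|X'γ) − τ] ≥ 0 a.s. for all γ ∈ Γ}, Θ = {b : X'b·[P(Y=1|X) − τ] ≥ 0 a.s.}, Θ̃ = {b : X'b·[P(Y=1|X'b, X'γ) − τ] ≥ 0 a.s. for all γ ∈ Γ}, and Θ̄ = {b : X'b·[P(Y=1|X'b) − τ] ≥ 0 a.s.}. -/

import Mathlib

open MeasureTheory Set

/-- Conditional expectation of `f` given the σ-algebra generated by the random element `X`. -/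
noncomputable def condExpGiven {Ω 𝓧 : Type*} [MeasurableSpace Ω] [MeasurableSpace 𝓧]
    (μ : Measure Ω) (X : Ω → 𝓧) (f : Ω → ℝ) : Ω → ℝ :=
  μ[f | MeasurableSpace.comap X inferInstance]


namespace SandwichAux

lemma setIntegral_pos_of_ae_pos {Ω : Type*} [mΩ : MeasurableSpace Ω] {μ : Measure Ω}
    {N : Set Ω} (hN : MeasurableSet N) (hμN : μ N ≠ 0)
    {f : Ω → ℝ} (hf : Integrable f μ)
    (hpos : ∀ᵐ ω ∂μ, ω ∈ N → 0 < f ω) : 0 < ∫ ω in N, f ω ∂μ := by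
  have hres : ∀ᵐ ω ∂μ.restrict N, 0 < f ω := (ae_restrict_iff' hN).2 hpos
  have hnn : 0 ≤ᵐ[μ.restrict N] f := hres.mono fun ω h => h.le
  rcases lt_or_eq_of_le (integral_nonneg_of_ae hnn) with h | h
  · exact h
  · exfalso
    have hz : f =ᵐ[μ.restrict N] 0 :=
      (integral_eq_zero_iff_of_nonneg_ae hnn hf.integrableOn).1 h.symm
    have hfalse : ∀ᵐ ω ∂μ.restrict N, False := by
      filter_upwards [hz, hres] with ω h0 hp
      rw [Pi.zero_apply] at h0
      exact absurd h0 (ne_of_gt hp)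
    have hzero : μ.restrict N Set.univ = 0 := by simpa using hfalse
    rw [Measure.restrict_apply_univ] at hzero
    exact hμN hzero

lemma transfer_le {Ω : Type*} {𝒢 m : MeasurableSpace Ω} [mΩ : MeasurableSpace Ω]
    (μ : Measure Ω) [IsProbabilityMeasure μ]
    (h𝒢m : 𝒢 ≤ m) (hm : m ≤ mΩ)
    {Y : Ω → ℝ} (hY : Integrable Y μ) {c : ℝ} {S : Set Ω} (hS : MeasurableSet[𝒢] S)
    (h : ∀ᵐ ω ∂μ, ω ∈ S → (μ[Y|m]) ω ≤ c) :
    ∀ᵐ ω ∂μ, ω ∈ S → (μ[Y|𝒢]) ω ≤ c := by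
  have h𝒢 : 𝒢 ≤ mΩ := h𝒢m.trans hm
  have hgm : Measurable[𝒢] (μ[Y|𝒢]) := stronglyMeasurable_condExp.measurable
  have hN𝒢 : MeasurableSet[𝒢] (S ∩ {ω | c < (μ[Y|𝒢]) ω}) :=
    MeasurableSet.inter hS (hgm measurableSet_Ioi)
  set N : Set Ω := S ∩ {ω | c < (μ[Y|𝒢]) ω} with hNdef
  have hNmΩ : MeasurableSet N := h𝒢 _ hN𝒢
  by_cases hμN : μ N = 0
  · have hae : ∀ᵐ ω ∂μ, ω ∉ N := by
      rw [ae_iff]; simpa using hμN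
    filter_upwards [hae] with ω hω hωS
    by_contra hc
    exact hω ⟨hωS, lt_of_not_ge hc⟩
  · exfalso
    have h1 : ∫ ω in N, (μ[Y|𝒢]) ω ∂μ = ∫ ω in N, Y ω ∂μ := setIntegral_condExp h𝒢 hY hN𝒢
    have h2 : ∫ ω in N, (μ[Y|m]) ω ∂μ = ∫ ω in N, Y ω ∂μ :=
      setIntegral_condExp hm hY (h𝒢m _ hN𝒢)
    have hcint : IntegrableOn (fun _ : Ω => c) N μ :=
      integrableOn_const (measure_ne_top μ N)
    have h3 : ∫ ω in N, (μ[Y|m]) ω ∂μ ≤ c * (μ N).toReal := by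
      have hres : ∀ᵐ ω ∂μ.restrict N, (μ[Y|m]) ω ≤ c :=
        (ae_restrict_iff' hNmΩ).2 (h.mono fun ω hω hωN => hω hωN.1)
      calc ∫ ω in N, (μ[Y|m]) ω ∂μ ≤ ∫ _ in N, c ∂μ :=
            setIntegral_mono_ae_restrict integrable_condExp.integrableOn hcint hres
        _ = c * (μ N).toReal := by rw [setIntegral_const, smul_eq_mul, mul_comm, measureReal_def]
    have h4 : 0 < ∫ ω in N, ((μ[Y|𝒢]) ω - c) ∂μ :=
      setIntegral_pos_of_ae_pos hNmΩ hμN (integrable_condExp.sub (integrable_const c))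
        (Filter.Eventually.of_forall fun ω hω => sub_pos.2 hω.2)
    have h5 : ∫ ω in N, ((μ[Y|𝒢]) ω - c) ∂μ = (∫ ω in N, (μ[Y|𝒢]) ω ∂μ) - c * (μ N).toReal := by
      rw [integral_sub integrable_condExp.integrableOn hcint, setIntegral_const,
        smul_eq_mul, mul_comm, measureReal_def]
    linarith

lemma transfer_lt {Ω : Type*} {𝒢 m : MeasurableSpace Ω} [mΩ : MeasurableSpace Ω]
    (μ : Measure Ω) [IsProbabilityMeasure μ]
    (h𝒢m : 𝒢 ≤ m) (hm : m ≤ mΩ)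
    {Y : Ω → ℝ} (hY : Integrable Y μ) {c : ℝ} {S : Set Ω} (hS : MeasurableSet[𝒢] S)
    (h : ∀ᵐ ω ∂μ, ω ∈ S → c < (μ[Y|m]) ω) :
    ∀ᵐ ω ∂μ, ω ∈ S → c < (μ[Y|𝒢]) ω := by
  have h𝒢 : 𝒢 ≤ mΩ := h𝒢m.trans hm
  have hgm : Measurable[𝒢] (μ[Y|𝒢]) := stronglyMeasurable_condExp.measurable
  have hN𝒢 : MeasurableSet[𝒢] (S ∩ {ω | (μ[Y|𝒢]) ω ≤ c}) :=
    MeasurableSet.inter hS (hgm measurableSet_Iic)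
  set N : Set Ω := S ∩ {ω | (μ[Y|𝒢]) ω ≤ c} with hNdef
  have hNmΩ : MeasurableSet N := h𝒢 _ hN𝒢
  by_cases hμN : μ N = 0
  · have hae : ∀ᵐ ω ∂μ, ω ∉ N := by
      rw [ae_iff]; simpa using hμN
    filter_upwards [hae] with ω hω hωS
    by_contra hc
    exact hω ⟨hωS, le_of_not_gt hc⟩
  · exfalso
    have h1 : ∫ ω in N, (μ[Y|𝒢]) ω ∂μ = ∫ ω in N, Y ω ∂μ := setIntegral_condExp h𝒢 hY hN𝒢
    have h2 : ∫ ω in N, (μ[Y|m]) ω ∂μ = ∫ ω in N, Y ω ∂μ :=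
      setIntegral_condExp hm hY (h𝒢m _ hN𝒢)
    have hcint : IntegrableOn (fun _ : Ω => c) N μ :=
      integrableOn_const (measure_ne_top μ N)
    have h3 : ∫ ω in N, (μ[Y|𝒢]) ω ∂μ ≤ c * (μ N).toReal := by
      have hres : ∀ᵐ ω ∂μ.restrict N, (μ[Y|𝒢]) ω ≤ c :=
        (ae_restrict_iff' hNmΩ).2 (Filter.Eventually.of_forall fun ω hω => hω.2)
      calc ∫ ω in N, (μ[Y|𝒢]) ω ∂μ ≤ ∫ _ in N, c ∂μ :=
            setIntegral_mono_ae_restrict integrable_condExp.integrableOn hcint hres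
        _ = c * (μ N).toReal := by rw [setIntegral_const, smul_eq_mul, mul_comm, measureReal_def]
    have h4 : 0 < ∫ ω in N, ((μ[Y|m]) ω - c) ∂μ :=
      setIntegral_pos_of_ae_pos hNmΩ hμN (integrable_condExp.sub (integrable_const c))
        (h.mono fun ω hω hωN => sub_pos.2 (hω hωN.1))
    have h5 : ∫ ω in N, ((μ[Y|m]) ω - c) ∂μ = (∫ ω in N, (μ[Y|m]) ω ∂μ) - c * (μ N).toReal := by
      rw [integral_sub integrable_condExp.integrableOn hcint, setIntegral_const,
        smul_eq_mul, mul_comm, measureReal_def]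
    linarith

lemma transfer_ge {Ω : Type*} {𝒢 m : MeasurableSpace Ω} [mΩ : MeasurableSpace Ω]
    (μ : Measure Ω) [IsProbabilityMeasure μ]
    (h𝒢m : 𝒢 ≤ m) (hm : m ≤ mΩ)
    {Y : Ω → ℝ} (hY : Integrable Y μ) {c : ℝ} {S : Set Ω} (hS : MeasurableSet[𝒢] S)
    (h : ∀ᵐ ω ∂μ, ω ∈ S → c ≤ (μ[Y|m]) ω) :
    ∀ᵐ ω ∂μ, ω ∈ S → c ≤ (μ[Y|𝒢]) ω := by
  have hneg : ∀ᵐ ω ∂μ, ω ∈ S → (μ[(-Y)|m]) ω ≤ -c := by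
    filter_upwards [h, condExp_neg (m := m) (μ := μ) Y] with ω hω hn hmem
    rw [hn, Pi.neg_apply]
    exact neg_le_neg (hω hmem)
  have := transfer_le μ h𝒢m hm hY.neg hS hneg
  filter_upwards [this, condExp_neg (m := 𝒢) (μ := μ) Y] with ω hω hn hmem
  have h2 := hω hmem
  rw [hn, Pi.neg_apply] at h2
  linarith

lemma transfer_gt {Ω : Type*} {𝒢 m : MeasurableSpace Ω} [mΩ : MeasurableSpace Ω]
    (μ : Measure Ω) [IsProbabilityMeasure μ]
    (h𝒢m : 𝒢 ≤ m) (hm : m ≤ mΩ)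
    {Y : Ω → ℝ} (hY : Integrable Y μ) {c : ℝ} {S : Set Ω} (hS : MeasurableSet[𝒢] S)
    (h : ∀ᵐ ω ∂μ, ω ∈ S → (μ[Y|m]) ω < c) :
    ∀ᵐ ω ∂μ, ω ∈ S → (μ[Y|𝒢]) ω < c := by
  have hneg : ∀ᵐ ω ∂μ, ω ∈ S → -c < (μ[(-Y)|m]) ω := by
    filter_upwards [h, condExp_neg (m := m) (μ := μ) Y] with ω hω hn hmem
    rw [hn, Pi.neg_apply]
    exact neg_lt_neg (hω hmem)
  have := transfer_lt μ h𝒢m hm hY.neg hS hneg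
  filter_upwards [this, condExp_neg (m := 𝒢) (μ := μ) Y] with ω hω hn hmem
  have h2 := hω hmem
  rw [hn, Pi.neg_apply] at h2
  linarith

lemma sign_transfer {Ω : Type*} {𝒢 m : MeasurableSpace Ω} [mΩ : MeasurableSpace Ω]
    (μ : Measure Ω) [IsProbabilityMeasure μ]
    (h𝒢m : 𝒢 ≤ m) (hm : m ≤ mΩ)
    {Y Z : Ω → ℝ} (hY : Integrable Y μ) (hZ : Measurable[𝒢] Z) {τ : ℝ}
    (h : ∀ᵐ ω ∂μ, Z ω * ((μ[Y|m]) ω - τ) ≥ 0) :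
    ∀ᵐ ω ∂μ, Z ω * ((μ[Y|𝒢]) ω - τ) ≥ 0 := by
  have hpos : ∀ᵐ ω ∂μ, ω ∈ {ω | 0 < Z ω} → τ ≤ (μ[Y|m]) ω := by
    filter_upwards [h] with ω hω hmem
    by_contra hc
    push_neg at hc
    have := mul_neg_of_pos_of_neg hmem (sub_neg.2 hc)
    exact absurd hω (by simpa using this.not_ge)
  have hneg : ∀ᵐ ω ∂μ, ω ∈ {ω | Z ω < 0} → (μ[Y|m]) ω ≤ τ := by
    filter_upwards [h] with ω hω hmem
    by_contra hc
    push_neg at hc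
    have := mul_neg_of_neg_of_pos hmem (sub_pos.2 hc)
    exact absurd hω (by simpa using this.not_ge)
  have hge := transfer_ge μ h𝒢m hm hY (hZ measurableSet_Ioi) hpos
  have hle := transfer_le μ h𝒢m hm hY (hZ measurableSet_Iio) hneg
  filter_upwards [hge, hle] with ω h1 h2
  rcases lt_trichotomy (Z ω) 0 with hz | hz | hz
  · have := mul_nonneg (neg_nonneg.2 hz.le) (neg_nonneg.2 (sub_nonpos.2 (h2 hz)))
    nlinarith [this]
  · simp [hz]
  · exact mul_nonneg hz.le (sub_nonneg.2 (h1 hz))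


lemma main_step {Ω : Type*} {𝒢 m : MeasurableSpace Ω} [mΩ : MeasurableSpace Ω]
    (μ : Measure Ω) [IsProbabilityMeasure μ]
    (h𝒢m : 𝒢 ≤ m) (hm : m ≤ mΩ)
    {Y W V G : Ω → ℝ} (hY : Integrable Y μ) {τ : ℝ}
    (hE : (μ[Y|m]) =ᵐ[μ] G)
    (hGsign : ∀ᵐ ω ∂μ, (0 < V ω → τ < G ω) ∧ (V ω < 0 → G ω < τ))
    (hV0 : ∀ᵐ ω ∂μ, V ω ≠ 0)
    (hSp : MeasurableSet[𝒢] {ω | 0 < V ω}) (hSn : MeasurableSet[𝒢] {ω | V ω < 0})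
    (h : ∀ᵐ ω ∂μ, W ω * ((μ[Y|𝒢]) ω - τ) ≥ 0) :
    ∀ᵐ ω ∂μ, W ω * ((μ[Y|m]) ω - τ) ≥ 0 := by
  have hp : ∀ᵐ ω ∂μ, ω ∈ {ω | 0 < V ω} → τ < (μ[Y|m]) ω := by
    filter_upwards [hE, hGsign] with ω he hs hmem
    rw [he]; exact hs.1 hmem
  have hn : ∀ᵐ ω ∂μ, ω ∈ {ω | V ω < 0} → (μ[Y|m]) ω < τ := by
    filter_upwards [hE, hGsign] with ω he hs hmem
    rw [he]; exact hs.2 hmem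
  have hp' := transfer_lt μ h𝒢m hm hY hSp hp
  have hn' := transfer_gt μ h𝒢m hm hY hSn hn
  filter_upwards [h, hp', hn', hE, hGsign, hV0] with ω hω hp2 hn2 he hs hv
  rcases lt_trichotomy (V ω) 0 with h1 | h1 | h1
  · have hWle : W ω ≤ 0 := by
      by_contra hc
      push_neg at hc
      nlinarith [hn2 h1, hω]
    have hle : (μ[Y|m]) ω - τ ≤ 0 := by rw [he]; linarith [hs.2 h1]
    nlinarith
  · exact absurd h1 hv
  · have hWge : 0 ≤ W ω := by
      by_contra hc
      push_neg at hc
      nlinarith [hp2 h1, hω]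
    have hge : 0 ≤ (μ[Y|m]) ω - τ := by rw [he]; linarith [hs.1 h1]
    exact mul_nonneg hWge hge

end SandwichAux

open SandwichAux

/-- The σ-algebra generated by a random element. -/
def sigmaOf {Ω 𝓧 : Type*} [MeasurableSpace 𝓧] (X : Ω → 𝓧) : MeasurableSpace Ω :=
  MeasurableSpace.comap X inferInstance

lemma sigmaOf_comp_le {Ω 𝓧 E : Type*} [MeasurableSpace 𝓧] [MeasurableSpace E]
    (X : Ω → 𝓧) {f : 𝓧 → E} (hf : Measurable f) :
    sigmaOf (fun ω => f (X ω)) ≤ sigmaOf X := by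
  have hc : (fun ω => f (X ω)) = f ∘ X := rfl
  rw [sigmaOf, sigmaOf, hc, ← MeasurableSpace.comap_comp]
  exact MeasurableSpace.comap_mono (measurable_iff_comap_le.1 hf)

lemma sigmaOf_measurable {Ω 𝓧 : Type*} [MeasurableSpace 𝓧] (X : Ω → 𝓧) :
    Measurable[sigmaOf X] X :=
  measurable_iff_comap_le.2 le_rfl



/-- In the binary choice model under the stated conditions, the identified set
satisfies the sandwich relation `Θ̲ ⊆ Θ = Θ̃ ⊆ Θ̄`, where the four sets condition on,
respectively: the single index `X'γ` for all `γ ∈ Γ`; the full covariate vector `X`;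
the pair of indices `(X'b, X'γ)` for all `γ ∈ Γ`; and the single index `X'b`. -/
theorem sandwich_relation {d : ℕ} [NeZero d] {Ω : Type*} [MeasurableSpace Ω]
    (μ : Measure Ω) [IsProbabilityMeasure μ]
    (τ : ℝ) (hτ : τ ∈ Ioo (0:ℝ) 1)
    (X : Ω → Fin d → ℝ) (hX : Measurable X)
    (ε : Ω → ℝ) (hε : Measurable ε)
    (ΓX : Set (Fin d → ℝ)) (hsupp : ∀ᵐ ω ∂μ, X ω ∈ ΓX)
    (Γ : Set (Fin d → ℝ)) (β : Fin d → ℝ) (hβ : β ∈ Γ)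
    -- scale normalization |b₁| = 1
    (hscale : ∀ b ∈ Γ, |b 0| = 1)
    -- the indices X'b are continuously distributed for every b ∈ Γ
    (hcont : ∀ b ∈ Γ, μ {ω | ∑ i, X ω i * b i = 0} = 0)
    -- the binary outcome: Y = 1{X'β ≥ ε}
    (Y : Ω → ℝ)
    (hYdef : ∀ ω, Y ω = if ε ω ≤ ∑ i, X ω i * β i then 1 else 0)
    -- `F x` is the cdf of `ε` conditional on `X = x`
    (F : (Fin d → ℝ) → ℝ → ℝ)
    (hFmono : ∀ x ∈ ΓX, Monotone (F x))
    (δ : ℝ) (hδ : 0 < δ)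
    (hFstrict : ∀ x ∈ ΓX, StrictMonoOn (F x) (Ioo (-δ) δ))
    -- quantile independence: Q_τ(ε|X=x) = 0
    (hquant : ∀ x ∈ ΓX, F x 0 = τ)
    -- P(Y=1|X) = F(X)(X'β) almost surely
    (hPY1 : condExpGiven μ X Y =ᵐ[μ] fun ω => F (X ω) (∑ i, X ω i * β i)) :
    -- Θ̲ ⊆ Θ
    ({b ∈ Γ | ∀ γ ∈ Γ, ∀ᵐ ω ∂μ,
        (∑ i, X ω i * b i) *
          (condExpGiven μ (fun ω' => ∑ i, X ω' i * γ i) Y ω - τ) ≥ 0} ⊆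
      {b ∈ Γ | ∀ᵐ ω ∂μ,
        (∑ i, X ω i * b i) * (condExpGiven μ X Y ω - τ) ≥ 0}) ∧
    -- Θ = Θ̃
    ({b ∈ Γ | ∀ᵐ ω ∂μ,
        (∑ i, X ω i * b i) * (condExpGiven μ X Y ω - τ) ≥ 0} =
      {b ∈ Γ | ∀ γ ∈ Γ, ∀ᵐ ω ∂μ,
        (∑ i, X ω i * b i) *
          (condExpGiven μ (fun ω' => (∑ i, X ω' i * b i, ∑ i, X ω' i * γ i)) Y ω - τ)
            ≥ 0}) ∧
    -- Θ̃ ⊆ Θ̄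
    ({b ∈ Γ | ∀ γ ∈ Γ, ∀ᵐ ω ∂μ,
        (∑ i, X ω i * b i) *
          (condExpGiven μ (fun ω' => (∑ i, X ω' i * b i, ∑ i, X ω' i * γ i)) Y ω - τ)
            ≥ 0} ⊆
      {b ∈ Γ | ∀ᵐ ω ∂μ,
        (∑ i, X ω i * b i) *
          (condExpGiven μ (fun ω' => ∑ i, X ω' i * b i) Y ω - τ) ≥ 0}) := by
  classical
  have hg : ∀ b : Fin d → ℝ, Measurable (fun x : Fin d → ℝ => ∑ i, x i * b i) := fun b =>
    Finset.measurable_sum _ fun i _ => (measurable_pi_apply i).mul_const _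
  have hZb : ∀ b : Fin d → ℝ, Measurable (fun ω => ∑ i, X ω i * b i) := fun b =>
    (hg b).comp hX
  have hmXle : sigmaOf X ≤ (inferInstance : MeasurableSpace Ω) :=
    measurable_iff_comap_le.1 hX
  have hYm : Measurable Y := by
    have hYfun : Y = fun ω => if ε ω ≤ ∑ i, X ω i * β i then (1:ℝ) else 0 := funext hYdef
    rw [hYfun]
    exact Measurable.ite (measurableSet_le hε (hZb β)) measurable_const measurable_const
  have hYint : Integrable Y μ := by
    refine ⟨hYm.aestronglyMeasurable, ?_⟩
    refine HasFiniteIntegral.of_bounded (C := 1) ?_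
    filter_upwards with ω
    rw [hYdef ω]
    split <;> simp
  have hGsign : ∀ᵐ ω ∂μ,
      (0 < (∑ i, X ω i * β i) → τ < F (X ω) (∑ i, X ω i * β i)) ∧
      ((∑ i, X ω i * β i) < 0 → F (X ω) (∑ i, X ω i * β i) < τ) := by
    filter_upwards [hsupp] with ω hx
    have h0 : (0:ℝ) ∈ Ioo (-δ) δ := ⟨by linarith, hδ⟩
    constructor
    · intro ht
      by_cases hlt : (∑ i, X ω i * β i) < δ
      · have hst := hFstrict _ hx h0 ⟨by linarith, hlt⟩ ht
        rwa [hquant _ hx] at hst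
      · have h1 := hFstrict _ hx h0 ⟨by linarith, by linarith⟩ (by linarith : (0:ℝ) < δ/2)
        have h2 : F (X ω) (δ/2) ≤ F (X ω) (∑ i, X ω i * β i) := hFmono _ hx (by linarith)
        rw [← hquant _ hx]; linarith
    · intro ht
      by_cases hlt : -δ < (∑ i, X ω i * β i)
      · have hst := hFstrict _ hx ⟨hlt, by linarith⟩ h0 ht
        rwa [hquant _ hx] at hst
      · have h1 := hFstrict _ hx ⟨by linarith, by linarith⟩ h0 (by linarith : -(δ/2) < (0:ℝ))
        have h2 : F (X ω) (∑ i, X ω i * β i) ≤ F (X ω) (-(δ/2)) := hFmono _ hx (by linarith)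
        rw [← hquant _ hx]; linarith
  have hV0 : ∀ᵐ ω ∂μ, (∑ i, X ω i * β i) ≠ 0 := by
    rw [ae_iff]
    simpa only [ne_eq, not_not] using hcont β hβ
  refine ⟨?_, ?_, ?_⟩
  · -- Θ̲ ⊆ Θ
    rintro b ⟨hbΓ, hcond⟩
    refine ⟨hbΓ, ?_⟩
    have hc := hcond β hβ
    exact main_step (𝒢 := sigmaOf (fun ω => ∑ i, X ω i * β i)) (m := sigmaOf X) μ
      (sigmaOf_comp_le X (hg β)) hmXle hYint hPY1 hGsign hV0
      ((sigmaOf_measurable _) measurableSet_Ioi)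
      ((sigmaOf_measurable _) measurableSet_Iio)
      hc
  · apply Set.Subset.antisymm
    · rintro b ⟨hbΓ, hcond⟩
      refine ⟨hbΓ, fun γ hγ => ?_⟩
      have hpm : Measurable (fun x : Fin d → ℝ => (∑ i, x i * b i, ∑ i, x i * γ i)) :=
        (hg b).prodMk (hg γ)
      exact sign_transfer μ (sigmaOf_comp_le X hpm) hmXle hYint
        (measurable_fst.comp (sigmaOf_measurable _)) hcond
    · rintro b ⟨hbΓ, hcond⟩
      refine ⟨hbΓ, ?_⟩
      have hpm : Measurable (fun x : Fin d → ℝ => (∑ i, x i * b i, ∑ i, x i * β i)) :=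
        (hg b).prodMk (hg β)
      have hc := hcond β hβ
      exact main_step (m := sigmaOf X) μ (sigmaOf_comp_le X hpm) hmXle hYint hPY1 hGsign hV0
        ((sigmaOf_measurable _) (measurableSet_lt measurable_const measurable_snd))
        ((sigmaOf_measurable _) (measurableSet_lt measurable_snd measurable_const))
        hc
  · rintro b ⟨hbΓ, hcond⟩
    refine ⟨hbΓ, ?_⟩
    have hpm : Measurable (fun x : Fin d → ℝ => (∑ i, x i * b i, ∑ i, x i * β i)) :=
      (hg b).prodMk (hg β)
    have hc := hcond β hβ
    exact sign_transfer μ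
      (𝒢 := sigmaOf (fun ω => ∑ i, X ω i * b i))
      (m := sigmaOf (fun ω => (∑ i, X ω i * b i, ∑ i, X ω i * β i)))
      (sigmaOf_comp_le (fun ω => (∑ i, X ω i * b i, ∑ i, X ω i * β i)) measurable_fst)
      ((sigmaOf_comp_le X hpm).trans hmXle) hYint (sigmaOf_measurable _) hc
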